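/- Positive identity principle: for every positive proposition A⁺ and context Γ, the inversion sequent Γ ; A⁺ ⊢ A⁺ is derivable in the focused sequent calculus for polarized intuitionistic logic. -/

import Mathlib

namespace StructuralFocalization

/- Polarized propositional intuitionistic logic -/
mutual
inductive PProp : Type
  | atom : Nat → PProp
  | down : NProp → PProp
  | bot  : PProp
  | or   : PProp → PProp → PProp
  | top  : PProp
  | and  : PProp → PProp → PProp
inductive NProp : Type
  | atom : Nat → NProp
  | up   : PProp → NProp
  | imp  : PProp → NProp → NProp
  | top  : NProp
  | and  : NProp → NProp → NProp
end

/- Hypotheses: negative propositions or suspended positives ⟨A⁺⟩ -/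
inductive Hyp : Type
  | neg  : NProp → Hyp
  | susp : PProp → Hyp

/- Succedents: A⁺, A⁻, or suspended ⟨A⁻⟩ -/
inductive Succ : Type
  | pos  : PProp → Succ
  | neg  : NProp → Succ
  | susp : NProp → Succ

abbrev Ctx := List Hyp

def Succ.stable : Succ → Prop
  | .pos _ => True
  | .susp _ => True
  | .neg _ => False

def Hyp.suspNormal : Hyp → Prop
  | .susp (PProp.atom _) => True
  | .susp _ => False
  | .neg _ => True

def Ctx.suspNormal (Γ : Ctx) : Prop := ∀ h ∈ Γ, h.suspNormal

def Succ.suspNormal : Succ → Prop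
  | .susp (NProp.atom _) => True
  | .susp _ => False
  | _ => True

/- The focused sequent calculus (Figures 3 and 4 of "Structural focalization",
   with the generalized id⁺/id⁻ rules for arbitrary suspended propositions). -/
mutual
/-- Right focus: Γ ⊢ [A⁺] -/
inductive RFoc : Ctx → PProp → Prop
  | idP {Γ A} : Hyp.susp A ∈ Γ → RFoc Γ A
  | downR {Γ A} : Inv Γ [] (Succ.neg A) → RFoc Γ (PProp.down A)
  | orR1 {Γ A B} : RFoc Γ A → RFoc Γ (PProp.or A B)
  | orR2 {Γ A B} : RFoc Γ B → RFoc Γ (PProp.or A B)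
  | topR {Γ} : RFoc Γ PProp.top
  | andR {Γ A B} : RFoc Γ A → RFoc Γ B → RFoc Γ (PProp.and A B)
/-- Inversion: Γ ; Ω ⊢ U -/
inductive Inv : Ctx → List PProp → Succ → Prop
  | focR {Γ A} : RFoc Γ A → Inv Γ [] (Succ.pos A)
  | focL {Γ A U} : Hyp.neg A ∈ Γ → Succ.stable U → LFoc Γ A U → Inv Γ [] U
  | etaP {Γ p Ω U} : Inv (Hyp.susp (PProp.atom p) :: Γ) Ω U → Inv Γ (PProp.atom p :: Ω) U
  | downL {Γ A Ω U} : Inv (Hyp.neg A :: Γ) Ω U → Inv Γ (PProp.down A :: Ω) U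
  | botL {Γ Ω U} : Inv Γ (PProp.bot :: Ω) U
  | orL {Γ A B Ω U} : Inv Γ (A :: Ω) U → Inv Γ (B :: Ω) U → Inv Γ (PProp.or A B :: Ω) U
  | topPL {Γ Ω U} : Inv Γ Ω U → Inv Γ (PProp.top :: Ω) U
  | andPL {Γ A B Ω U} : Inv Γ (A :: B :: Ω) U → Inv Γ (PProp.and A B :: Ω) U
  | etaN {Γ p} : Inv Γ [] (Succ.susp (NProp.atom p)) → Inv Γ [] (Succ.neg (NProp.atom p))
  | upR {Γ A} : Inv Γ [] (Succ.pos A) → Inv Γ [] (Succ.neg (NProp.up A))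
  | impR {Γ A B} : Inv Γ [A] (Succ.neg B) → Inv Γ [] (Succ.neg (NProp.imp A B))
  | topNR {Γ} : Inv Γ [] (Succ.neg NProp.top)
  | andNR {Γ A B} : Inv Γ [] (Succ.neg A) → Inv Γ [] (Succ.neg B) →
      Inv Γ [] (Succ.neg (NProp.and A B))
/-- Left focus: Γ ; [A⁻] ⊢ U -/
inductive LFoc : Ctx → NProp → Succ → Prop
  | idN {Γ A} : LFoc Γ A (Succ.susp A)
  | upL {Γ A U} : Inv Γ [A] U → LFoc Γ (NProp.up A) U
  | impL {Γ A B U} : RFoc Γ A → LFoc Γ B U → LFoc Γ (NProp.imp A B) U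
  | andL1 {Γ A B U} : LFoc Γ A U → LFoc Γ (NProp.and A B) U
  | andL2 {Γ A B U} : LFoc Γ B U → LFoc Γ (NProp.and A B) U
end

/- Unpolarized propositions and Kleene's G3 -/
inductive UProp : Type
  | atom : Nat → UProp
  | bot  : UProp
  | or   : UProp → UProp → UProp
  | top  : UProp
  | and  : UProp → UProp → UProp
  | imp  : UProp → UProp → UProp

inductive G3 : List UProp → UProp → Prop
  | init {Γ p} : UProp.atom p ∈ Γ → G3 Γ (UProp.atom p)
  | botL {Γ Q} : UProp.bot ∈ Γ → G3 Γ Q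
  | orR1 {Γ A B} : G3 Γ A → G3 Γ (UProp.or A B)
  | orR2 {Γ A B} : G3 Γ B → G3 Γ (UProp.or A B)
  | orL {Γ A B Q} : UProp.or A B ∈ Γ → G3 (A :: Γ) Q → G3 (B :: Γ) Q → G3 Γ Q
  | topR {Γ} : G3 Γ UProp.top
  | andR {Γ A B} : G3 Γ A → G3 Γ B → G3 Γ (UProp.and A B)
  | andL1 {Γ A B Q} : UProp.and A B ∈ Γ → G3 (A :: Γ) Q → G3 Γ Q
  | andL2 {Γ A B Q} : UProp.and A B ∈ Γ → G3 (B :: Γ) Q → G3 Γ Q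
  | impR {Γ A B} : G3 (A :: Γ) B → G3 Γ (UProp.imp A B)
  | impL {Γ A B Q} : UProp.imp A B ∈ Γ → G3 Γ A → G3 (B :: Γ) Q → G3 Γ Q

/-- G3 with an ordered auxiliary context Ψ: Γ; Ψ ⊢ Q -/
inductive G3Psi : List UProp → List UProp → UProp → Prop
  | cons {Γ P Ψ Q} : G3Psi (P :: Γ) Ψ Q → G3Psi Γ (P :: Ψ) Q
  | nil {Γ Q} : G3 Γ Q → G3Psi Γ [] Q

/- Erasure -/
mutual
def eraseP : PProp → UProp
  | .atom p => .atom p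
  | .down A => eraseN A
  | .bot => .bot
  | .or A B => .or (eraseP A) (eraseP B)
  | .top => .top
  | .and A B => .and (eraseP A) (eraseP B)
def eraseN : NProp → UProp
  | .atom p => .atom p
  | .up A => eraseP A
  | .imp A B => .imp (eraseP A) (eraseN B)
  | .top => .top
  | .and A B => .and (eraseN A) (eraseN B)
end

def eraseHyp : Hyp → UProp
  | .neg A => eraseN A
  | .susp A => eraseP A

def eraseCtx (Γ : Ctx) : List UProp := Γ.map eraseHyp

def eraseSucc : Succ → UProp
  | .pos A => eraseP A
  | .neg A => eraseN A
  | .susp A => eraseN A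

mutual
theorem expP (A : PProp) : ∀ (Γ : Ctx) {Ω U},
    (∀ Δ : Ctx, (∀ h ∈ Γ, h ∈ Δ) →
      (∀ Δ' : Ctx, (∀ h ∈ Δ, h ∈ Δ') → RFoc Δ' A) → Inv Δ Ω U) →
    Inv Γ (A :: Ω) U := by
  match A with
  | .atom p =>
    intro Γ Ω U k
    exact Inv.etaP (k _ (fun h hm => List.mem_cons_of_mem _ hm)
      (fun Δ' s' => RFoc.idP (s' _ List.mem_cons_self)))
  | .down N =>
    intro Γ Ω U k
    refine Inv.downL (k _ (fun h hm => List.mem_cons_of_mem _ hm)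
      (fun Δ' s' => RFoc.downR (expN N Δ' (fun Δ'' s'' U st l =>
        Inv.focL (s'' _ (s' _ List.mem_cons_self)) st l))))
  | .bot => intro Γ Ω U k; exact Inv.botL
  | .or A B =>
    intro Γ Ω U k
    exact Inv.orL
      (expP A Γ (fun Δ s fam => k Δ s (fun Δ' s' => RFoc.orR1 (fam Δ' s'))))
      (expP B Γ (fun Δ s fam => k Δ s (fun Δ' s' => RFoc.orR2 (fam Δ' s'))))
  | .top =>
    intro Γ Ω U k
    exact Inv.topPL (k Γ (fun _ h => h) (fun _ _ => RFoc.topR))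
  | .and A B =>
    intro Γ Ω U k
    exact Inv.andPL (expP A Γ (fun Δ s famA => expP B Δ (fun Δ' s' famB =>
      k Δ' (fun h hm => s' _ (s _ hm))
        (fun Δ'' s'' => RFoc.andR (famA Δ'' (fun h hm => s'' _ (s' _ hm)))
          (famB Δ'' s'')))))

theorem expN (N : NProp) : ∀ (Γ : Ctx),
    (∀ Δ : Ctx, (∀ h ∈ Γ, h ∈ Δ) → ∀ U, Succ.stable U → LFoc Δ N U → Inv Δ [] U) →
    Inv Γ [] (Succ.neg N) := by
  match N with
  | .atom p =>
    intro Γ k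
    exact Inv.etaN (k Γ (fun _ h => h) _ trivial LFoc.idN)
  | .up A =>
    intro Γ k
    exact Inv.upR (k Γ (fun _ h => h) (Succ.pos A) trivial
      (LFoc.upL (expP A Γ (fun Δ _ fam => Inv.focR (fam Δ (fun _ h => h))))))
  | .imp A B =>
    intro Γ k
    refine Inv.impR (expP A Γ (fun Δ s famA => ?_))
    exact expN B Δ (fun Δ' s' U st l =>
      k Δ' (fun h hm => s' _ (s _ hm)) U st (LFoc.impL (famA Δ' s') l))
  | .top => intro Γ k; exact Inv.topNR
  | .and A B =>
    intro Γ k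
    exact Inv.andNR
      (expN A Γ (fun Δ s U st l => k Δ s U st (LFoc.andL1 l)))
      (expN B Γ (fun Δ s U st l => k Δ s U st (LFoc.andL2 l)))
end

/-- Positive identity principle. -/
theorem positive_identity :
    ∀ (A : PProp) (Γ : Ctx), Inv Γ [A] (Succ.pos A) := by
  intro A Γ
  exact expP A Γ (fun Δ _ fam => Inv.focR (fam Δ (fun _ h => h)))

end StructuralFocalization
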